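/- For every prime p ≥ 5, if p is a Chebyshev prime, i.e., ∫_{ψ(p−1)}^{ψ(p)} dt/log t < 1, then ψ(p) > p. -/

import Mathlib

open scoped ArithmeticFunction

/-- The first Chebyshev function `θ(x) = ∑_{p ≤ x, p prime} log p`. -/
noncomputable def chebyshevTheta (x : ℝ) : ℝ :=
  ∑ p ∈ (Finset.range (⌊x⌋₊ + 1)).filter Nat.Prime, Real.log p

/-- The second Chebyshev function `ψ(x) = ∑_{n ≤ x} Λ(n)`. -/
noncomputable def chebyshevPsi (x : ℝ) : ℝ :=
  ∑ n ∈ Finset.range (⌊x⌋₊ + 1), Λ n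

/-- The prime counting function `π(x)`: the number of primes `≤ x`. -/
noncomputable def primePi (x : ℝ) : ℕ := Nat.primeCounting ⌊x⌋₊

/-- The `n`-th prime, with `nthPrime 1 = 2`, `nthPrime 2 = 3`, ... -/
noncomputable def nthPrime (n : ℕ) : ℕ := Nat.nth Nat.Prime (n - 1)

/-- The logarithmic integral `li(x)`, as a Cauchy principal value
`li(x) = lim_{ε→0⁺} (∫_0^{1-ε} dt/log t + ∫_{1+ε}^x dt/log t)`. -/
noncomputable def li (x : ℝ) : ℝ :=
  Filter.limUnder (nhdsWithin 0 (Set.Ioi (0 : ℝ))) fun ε =>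
    (∫ t in (0 : ℝ)..(1 - ε), 1 / Real.log t) + ∫ t in (1 + ε)..x, 1 / Real.log t

/-- The jump `J_n = ∫_{θ(p_n)}^{θ(p_{n+1})} dt / log t` of `li ∘ θ`. -/
noncomputable def J (n : ℕ) : ℝ :=
  ∫ t in chebyshevTheta (nthPrime n)..chebyshevTheta (nthPrime (n + 1)), 1 / Real.log t

/-- The jump `K_n = ∫_{ψ(p_{n+1}-1)}^{ψ(p_{n+1})} dt / log t` of `li ∘ ψ` at the prime `p_{n+1}`. -/
noncomputable def K (n : ℕ) : ℝ :=
  ∫ t in chebyshevPsi ((nthPrime (n + 1) : ℝ) - 1)..chebyshevPsi (nthPrime (n + 1)),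
    1 / Real.log t

theorem psi_gt_of_chebyshev_prime (p : ℕ) (hp : p.Prime) (h5 : 5 ≤ p)
    (h : (∫ t in chebyshevPsi ((p : ℝ) - 1)..chebyshevPsi p, 1 / Real.log t) < 1) :
    (p : ℝ) < chebyshevPsi p := by
  by_contra hle
  push_neg at hle
  set a := chebyshevPsi ((p : ℝ) - 1) with ha
  set b := chebyshevPsi (p : ℝ) with hb
  have hfloor1 : ⌊(p : ℝ)⌋₊ = p := Nat.floor_natCast p
  have hp1 : ((p : ℝ) - 1) = ((p - 1 : ℕ) : ℝ) := by
    have : (1 : ℕ) ≤ p := by omega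
    push_cast [this]; ring
  have hfloor2 : ⌊(p : ℝ) - 1⌋₊ = p - 1 := by rw [hp1, Nat.floor_natCast]
  have hpe : p - 1 + 1 = p := by omega
  have hsum : b = a + Real.log p := by
    rw [ha, hb, chebyshevPsi, chebyshevPsi, hfloor1, hfloor2, hpe,
      Finset.sum_range_succ, ArithmeticFunction.vonMangoldt_apply_prime hp]
  have hlog6 : Real.log 6 ≤ a := by
    rw [ha, chebyshevPsi, hfloor2, hpe]
    have hsub : ({2, 3} : Finset ℕ) ⊆ Finset.range p := by
      intro x hx; fin_cases hx <;> simp <;> omega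
    calc Real.log 6 = Λ 2 + Λ 3 := by
          rw [ArithmeticFunction.vonMangoldt_apply_prime Nat.prime_two,
              ArithmeticFunction.vonMangoldt_apply_prime Nat.prime_three,
              ← Real.log_mul (by norm_num) (by norm_num)]
          norm_num
      _ = ∑ n ∈ ({2, 3} : Finset ℕ), Λ n := by simp
      _ ≤ _ := Finset.sum_le_sum_of_subset_of_nonneg hsub
            (fun i _ _ => ArithmeticFunction.vonMangoldt_nonneg)
  have h1a : (1 : ℝ) < a := by
    refine lt_of_lt_of_le ?_ hlog6
    rw [Real.lt_log_iff_exp_lt (by norm_num)]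
    have := Real.exp_one_lt_d9
    linarith
  have hlogp_pos : 0 < Real.log p := Real.log_pos (by exact_mod_cast by omega)
  have hab : a ≤ b := by rw [hsum]; linarith
  have hcont : ContinuousOn (fun t => 1 / Real.log t) (Set.Icc a b) := by
    intro t ht
    have ht1 : 1 < t := lt_of_lt_of_le h1a ht.1
    refine ContinuousAt.continuousWithinAt ?_
    exact ContinuousAt.div continuousAt_const (Real.continuousAt_log (by linarith))
      (ne_of_gt (Real.log_pos ht1))
  have hint : IntervalIntegrable (fun t => 1 / Real.log t) MeasureTheory.volume a b := by
    apply ContinuousOn.intervalIntegrable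
    rwa [Set.uIcc_of_le hab]
  have hmono : (∫ t in a..b, (1 / Real.log p : ℝ)) ≤ ∫ t in a..b, 1 / Real.log t := by
    apply intervalIntegral.integral_mono_on hab intervalIntegrable_const hint
    intro t ht
    have ht1 : 1 < t := lt_of_lt_of_le h1a ht.1
    have htp : t ≤ p := le_trans ht.2 hle
    have hlt : 0 < Real.log t := Real.log_pos ht1
    have : Real.log t ≤ Real.log p := Real.log_le_log (by linarith) htp
    exact one_div_le_one_div_of_le hlt this
  have hconst : (∫ t in a..b, (1 / Real.log p : ℝ)) = 1 := by
    rw [intervalIntegral.integral_const, smul_eq_mul, hsum]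
    field_simp
    ring
  linarith
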